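/- Let H be a complex Hilbert space and d : B(H) → B(H) a derivation that is continuous in the norm topology and leaves invariant nothing extra; then d maps into B(H) and is inner: there exists a ∈ B(H) with d(x) = ax − xa (Sakai–Kadison innerness for B(H), the type I factor case of the paper's Theorem 3.2). -/
import Mathlib

open scoped InnerProductSpace

/-- Every (norm-continuous) derivation of `B(H)` is inner. -/
theorem stmt_17 {H : Type*} [NormedAddCommGroup H] [InnerProductSpace ℂ H]
    [CompleteSpace H]
    (d : (H →L[ℂ] H) →ₗ[ℂ] (H →L[ℂ] H)) (hcont : Continuous d)
    (hleib : ∀ x y : H →L[ℂ] H, d (x * y) = d x * y + x * d y) :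
    ∃ a : H →L[ℂ] H, ∀ x : H →L[ℂ] H, d x = a * x - x * a := by
  rcases subsingleton_or_nontrivial H with hs | hn
  · exact ⟨0, fun x => ContinuousLinearMap.ext fun v => Subsingleton.elim _ _⟩
  · obtain ⟨v, hv⟩ := exists_ne (0 : H)
    set ξ : H := ‖v‖⁻¹ • v with hξdef
    have hξ : ‖ξ‖ = 1 := norm_smul_inv_norm hv
    have hξ1 : (⟪ξ, ξ⟫_ℂ : ℂ) = 1 := by
      rw [inner_self_eq_norm_sq_to_K, hξ]; norm_num
    set t : H →L[ℂ] (H →L[ℂ] H) :=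
      ContinuousLinearMap.smulRightL ℂ H H (innerSL ℂ ξ) with ht
    have htapp : ∀ η ζ : H, t η ζ = ⟪ξ, ζ⟫_ℂ • η := fun η ζ => rfl
    have htξ : ∀ η : H, t η ξ = η := by
      intro η; rw [htapp, hξ1, one_smul]
    have hxt : ∀ (x : H →L[ℂ] H) (η : H), x * t η = t (x η) := by
      intro x η
      ext ζ
      simp only [ContinuousLinearMap.mul_apply, htapp, map_smul]
    set dc : (H →L[ℂ] H) →L[ℂ] (H →L[ℂ] H) := ⟨d, hcont⟩ with hdc
    set a : H →L[ℂ] H :=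
      (ContinuousLinearMap.apply ℂ H ξ).comp (dc.comp t) with ha
    have haapp : ∀ η : H, a η = d (t η) ξ := fun η => rfl
    refine ⟨a, fun x => ?_⟩
    ext η
    have key := congrArg (fun f : H →L[ℂ] H => f ξ) (hleib x (t η))
    simp only [ContinuousLinearMap.add_apply, ContinuousLinearMap.mul_apply,
      htξ, hxt] at key
    rw [ContinuousLinearMap.sub_apply, ContinuousLinearMap.mul_apply,
      ContinuousLinearMap.mul_apply, haapp, haapp, key]
    abel
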